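/- Let H be a partial building set in a geometric lattice L. A subset N ⊆ H is H-nested if and only if, viewing H as the atom set of the blown-up semilattice L(L,H), the set N has an upper bound in L(L,H) (i.e., N is a simplex of the atomic complex K(L(L,H))). -/

import Mathlib

/-- A finite lattice is geometric if it is atomistic and (upper) semimodular. -/
def IsGeomLat (L : Type) [Lattice L] [BoundedOrder L] [Fintype L] : Prop :=
  (∀ x : L, IsLUB {a : L | IsAtom a ∧ a ≤ x} x) ∧
  ∀ a b : L, a ⊓ b ⋖ a → b ⋖ a ⊔ b

/-- The set of factors `F(L,G;x) = max G_{≤x}` of an element `x` with respect to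
a subset `G ⊆ L`. -/
def factorsOf {L : Type} [Lattice L] [BoundedOrder L] (G : Set L) (x : L) : Set L :=
  {g | g ∈ G ∧ g ≤ x ∧ ∀ h ∈ G, h ≤ x → g ≤ h → g = h}

/-- A combinatorial building set in a (geometric) lattice `L`: a set `G` of
elements `> ⊥` such that for each `x > ⊥`, the join map from the product of the
lower intervals `[⊥, g]`, `g ∈ max G_{≤x}`, to `[⊥, x]` is a poset isomorphism
sending the `g`-th "unit vector" to `g`. -/
def IsBuildingSet (L : Type) [Lattice L] [BoundedOrder L] [Fintype L] [DecidableEq L]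
    (G : Set L) : Prop :=
  (∀ g ∈ G, ⊥ < g) ∧
  ∀ x : L, ⊥ < x →
    ∃ φ : ((g : factorsOf G x) → ↥(Set.Iic (g : L))) ≃o ↥(Set.Iic x),
      ∀ g : factorsOf G x,
        φ (fun h => if hh : h = g then ⟨(g : L), by simp [hh]⟩ else ⟨⊥, bot_le⟩) =
          ⟨(g : L), g.2.2.1⟩

/-- A partial building set `H` inside a building set `G`: `H ⊆ G`, `H` contains
all atoms, and the non-atomic part of `H` is an order filter of `G`. -/
def IsPartialBuilding (L : Type) [Lattice L] [BoundedOrder L] [Fintype L] [DecidableEq L]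
    (G H : Set L) : Prop :=
  H ⊆ G ∧ {a : L | IsAtom a} ⊆ H ∧
  ∀ g ∈ H, ¬ IsAtom g → ∀ h ∈ G, g ≤ h → h ∈ H

/-- `N` is `H`-nested: every antichain in `N` with at least two elements has its
join (computed in `L`) outside of `H`. -/
def IsNestedIn (L : Type) [Lattice L] [OrderBot L] (H : Set L) (N : Set L) : Prop :=
  ∀ S : Finset L, ↑S ⊆ N → 2 ≤ S.card → IsAntichain (· ≤ ·) (S : Set L) →
    S.sup id ∉ H

/-- A carrier type with an order relation and a membership predicate, used to
build iterated combinatorial blowups. -/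
structure PreP : Type 1 where
  α : Type
  le : α → α → Prop
  mem : α → Prop

/-- One combinatorial blowup step at an element `p`: valid elements are the old
elements `x ≱ p` (left summand) and the new pairs `(p,x)` with `x ≱ p` such
that the join `p ∨ x` exists (right summand), with the Feichtner–Kozlov order. -/
def blowStep (P : PreP) (p : P.α) : PreP where
  α := P.α ⊕ P.α
  le a b :=
    match a, b with
    | .inl x, .inl y => P.le x y
    | .inl x, .inr y => P.le x y
    | .inr x, .inr y => P.le x y
    | .inr _, .inl _ => False
  mem a :=
    match a with
    | .inl x => P.mem x ∧ ¬ P.le p x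
    | .inr x => P.mem x ∧ ¬ P.le p x ∧
        ∃ j, P.mem j ∧ P.le x j ∧ P.le p j ∧
          ∀ u, P.mem u → P.le x u → P.le p u → P.le j u

/-- The iterated combinatorial blowup of `L` at the elements of a list `l`
(performed from the tail of the list towards the head, so that the head is
blown up last), together with the canonical embedding of the surviving
elements of `L`. -/
def iterBl (L : Type) [LE L] : List L → (P : PreP) × (L → P.α)
  | [] => ⟨⟨L, (· ≤ ·), fun _ => True⟩, id⟩
  | p :: l =>
    let r := iterBl L l
    ⟨blowStep r.1 (r.2 p), fun x => Sum.inl (r.2 x)⟩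

/-- The total blow-down map from the iterated blowup back to `L`. -/
def blowDown (L : Type) [Lattice L] : (l : List L) → (iterBl L l).1.α → L
  | [], z => z
  | p :: l, z =>
    Sum.elim (fun y => blowDown L l y) (fun y => blowDown L l y ⊔ p) z

/-- `w` is the minimum of `(P.α, P.le)` restricted to `P.mem`. -/
def IsBotP (P : PreP) (w : P.α) : Prop :=
  P.mem w ∧ ∀ u, P.mem u → P.le w u

/-- `a` is an atom of `(P.α, P.le)` restricted to `P.mem`. -/
def IsAtomP (P : PreP) (a : P.α) : Prop :=
  P.mem a ∧ ¬ IsBotP P a ∧ ∀ w, P.mem w → P.le w a → w = a ∨ IsBotP P w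

set_option linter.unusedSectionVars false
set_option linter.unusedVariables false
variable {L : Type} [Lattice L] [BoundedOrder L] [Fintype L] [DecidableEq L]

noncomputable def marksF : (l : List L) → (iterBl L l).1.α → Finset L
  | [], _ => ∅
  | _ :: l, Sum.inl y => marksF l y
  | p :: l, Sum.inr y => insert p (marksF l y)

def baseF : (l : List L) → (iterBl L l).1.α → L
  | [], z => z
  | _ :: l, Sum.inl y => baseF l y
  | _ :: l, Sum.inr y => baseF l y

noncomputable def mkEl (x : L) (M : Finset L) : (l : List L) → (iterBl L l).1.α
  | [] => x
  | p :: l => if p ∈ M then Sum.inr (mkEl x M l) else Sum.inl (mkEl x M l)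

def rebF : (l : List L) → (iterBl L l).1.α → L → (iterBl L l).1.α
  | [], _, x => x
  | _ :: l, Sum.inl y, x => Sum.inl (rebF l y x)
  | _ :: l, Sum.inr y, x => Sum.inr (rebF l y x)

lemma marksF_subset : ∀ (l : List L) (z), marksF l z ⊆ l.toFinset
  | [], z => by simp [marksF]
  | p :: l, Sum.inl y => by
      simpa [marksF] using (marksF_subset l y).trans (by simp [List.toFinset_cons, Finset.subset_insert])
  | p :: l, Sum.inr y => by
      simp only [marksF, List.toFinset_cons]
      exact Finset.insert_subset_insert _ (marksF_subset l y)

lemma baseF_emb : ∀ (l : List L) (x : L), baseF l ((iterBl L l).2 x) = x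
  | [], x => rfl
  | p :: l, x => baseF_emb l x

lemma marksF_emb : ∀ (l : List L) (x : L), marksF l ((iterBl L l).2 x) = ∅
  | [], x => rfl
  | p :: l, x => marksF_emb l x

lemma baseF_reb : ∀ (l : List L) (z) (x : L), baseF l (rebF l z x) = x
  | [], z, x => rfl
  | _ :: l, Sum.inl y, x => baseF_reb l y x
  | _ :: l, Sum.inr y, x => baseF_reb l y x

lemma marksF_reb : ∀ (l : List L) (z) (x : L), marksF l (rebF l z x) = marksF l z
  | [], z, x => rfl
  | _ :: l, Sum.inl y, x => marksF_reb l y x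
  | p :: l, Sum.inr y, x => by simp [rebF, marksF, marksF_reb l y x]

lemma baseF_mkEl : ∀ (l : List L) (x : L) (M : Finset L), baseF l (mkEl x M l) = x
  | [], x, M => rfl
  | p :: l, x, M => by
      by_cases h : p ∈ M <;> simp [mkEl, h, baseF, baseF_mkEl l x M]

lemma marksF_mkEl : ∀ (l : List L), l.Nodup → ∀ (x : L) (M : Finset L),
    marksF l (mkEl x M l) = l.toFinset.filter (· ∈ M)
  | [], _, x, M => by simp [mkEl, marksF]
  | p :: l, hnd, x, M => by
      have hp : p ∉ l := (List.nodup_cons.1 hnd).1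
      have ih := marksF_mkEl l (List.nodup_cons.1 hnd).2 x M
      by_cases h : p ∈ M
      · simp [mkEl, h, marksF, ih, List.toFinset_cons, Finset.filter_insert]
      · simp [mkEl, h, marksF, ih, List.toFinset_cons, Finset.filter_insert]

lemma extF : ∀ (l : List L), l.Nodup → ∀ a b, baseF l a = baseF l b →
    marksF l a = marksF l b → a = b
  | [], _, a, b, h, _ => h
  | p :: l, hnd, a, b, hb, hm => by
      have hp : p ∉ l := (List.nodup_cons.1 hnd).1
      have hnd' := (List.nodup_cons.1 hnd).2
      match a, b with
      | Sum.inl a', Sum.inl b' => exact congrArg _ (extF l hnd' a' b' hb hm)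
      | Sum.inr a', Sum.inr b' =>
          refine congrArg _ (extF l hnd' a' b' hb ?_)
          have hpa : p ∉ marksF l a' := fun h => hp (by simpa using marksF_subset l a' h)
          have hpb : p ∉ marksF l b' := fun h => hp (by simpa using marksF_subset l b' h)
          simp only [marksF] at hm
          rw [← Finset.erase_insert hpa, hm, Finset.erase_insert hpb]
      | Sum.inl a', Sum.inr b' => 
          exfalso
          have hpa : p ∉ marksF l a' := fun h => hp (by simpa using marksF_subset l a' h)
          simp only [marksF] at hm
          exact hpa (hm ▸ Finset.mem_insert_self p _)
      | Sum.inr a', Sum.inl b' =>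
          exfalso
          have hpb : p ∉ marksF l b' := fun h => hp (by simpa using marksF_subset l b' h)
          simp only [marksF] at hm
          exact hpb (hm ▸ Finset.mem_insert_self p _)

lemma blowDown_eq : ∀ (l : List L) (z), blowDown L l z = baseF l z ⊔ (marksF l z).sup id
  | [], z => by simp [blowDown, baseF, marksF]; exact (sup_bot_eq _).symm
  | p :: l, Sum.inl y => by
      simpa [blowDown, baseF, marksF] using blowDown_eq l y
  | p :: l, Sum.inr y => by
      simp only [blowDown, Sum.elim_inr, baseF, marksF, blowDown_eq l y, Finset.sup_insert, id]
      ac_rfl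

lemma leF_iff : ∀ (l : List L), l.Nodup → ∀ a b,
    (iterBl L l).1.le a b ↔ (baseF l a ≤ baseF l b ∧ marksF l a ⊆ marksF l b)
  | [], _, a, b => by simp [iterBl, baseF, marksF]
  | p :: l, hnd, a, b => by
      have hp : p ∉ l := (List.nodup_cons.1 hnd).1
      have hnd' := (List.nodup_cons.1 hnd).2
      have hnotin : ∀ z : (iterBl L l).1.α, p ∉ marksF l z := fun z h =>
        hp (by simpa using marksF_subset l z h)
      match a, b with
      | Sum.inl a', Sum.inl b' =>
          show (iterBl L l).1.le a' b' ↔ _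
          simp only [baseF, marksF]
          exact leF_iff l hnd' a' b'
      | Sum.inl a', Sum.inr b' =>
          show (iterBl L l).1.le a' b' ↔ _
          simp only [baseF, marksF]
          rw [leF_iff l hnd' a' b']
          constructor
          · rintro ⟨h1, h2⟩; exact ⟨h1, h2.trans (Finset.subset_insert _ _)⟩
          · rintro ⟨h1, h2⟩
            refine ⟨h1, fun r hr => ?_⟩
            rcases Finset.mem_insert.1 (h2 hr) with h | h
            · exact absurd (h ▸ hr) (hnotin a')
            · exact h
      | Sum.inr a', Sum.inr b' =>
          show (iterBl L l).1.le a' b' ↔ _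
          simp only [baseF, marksF]
          rw [leF_iff l hnd' a' b']
          constructor
          · rintro ⟨h1, h2⟩; exact ⟨h1, Finset.insert_subset_insert _ h2⟩
          · rintro ⟨h1, h2⟩
            refine ⟨h1, fun r hr => ?_⟩
            rcases Finset.mem_insert.1 (h2 (Finset.mem_insert_of_mem hr)) with h | h
            · exact absurd (h ▸ hr) (hnotin a')
            · exact h
      | Sum.inr a', Sum.inl b' =>
          show False ↔ _
          simp only [baseF, marksF, false_iff, not_and]
          intro _ h
          exact hnotin b' (h (Finset.mem_insert_self _ _))

def afterAll (l : List L) (R : Finset L) (q : L) : Prop :=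
  ∀ r ∈ R, l.idxOf r < l.idxOf q

def CharPred (l : List L) (x : L) (M : Finset L) : Prop :=
  ∀ R ⊆ M, ∀ q ∈ l, afterAll l R q → ¬ q ≤ x ⊔ R.sup id

lemma afterAll_head (p : L) (l : List L) (R : Finset L) :
    afterAll (p :: l) R p ↔ R = ∅ := by
  constructor
  · intro h
    by_contra hne
    obtain ⟨r, hr⟩ := Finset.nonempty_iff_ne_empty.2 hne
    have := h r hr
    simp [List.idxOf_cons_self] at this
  · rintro rfl; intro r hr; simp at hr

lemma afterAll_cons_tail {p : L} {l : List L} {R : Finset L} {q : L}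
    (hp : p ∉ l) (hR : R ⊆ l.toFinset) (hq : q ∈ l) :
    afterAll (p :: l) R q ↔ afterAll l R q := by
  have hqp : q ≠ p := fun h => hp (h ▸ hq)
  constructor
  · intro h r hr
    have hrl : r ∈ l := by simpa using hR hr
    have hrp : r ≠ p := fun h => hp (h ▸ hrl)
    have := h r hr
    rwa [List.idxOf_cons_ne _ hrp.symm, List.idxOf_cons_ne _ hqp.symm,
      Nat.succ_lt_succ_iff] at this
  · intro h r hr
    have hrl : r ∈ l := by simpa using hR hr
    have hrp : r ≠ p := fun h => hp (h ▸ hrl)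
    rw [List.idxOf_cons_ne _ hrp.symm, List.idxOf_cons_ne _ hqp.symm,
      Nat.succ_lt_succ_iff]
    exact h r hr

lemma charPred_cons_notmem {p : L} {l : List L} {M : Finset L} {x : L}
    (hp : p ∉ l) (hM : M ⊆ l.toFinset) :
    CharPred (p :: l) x M ↔ (CharPred l x M ∧ ¬ p ≤ x) := by
  constructor
  · intro h
    refine ⟨fun R hR q hq ha => h R hR q (List.mem_cons_of_mem _ hq)
      ((afterAll_cons_tail hp (hR.trans hM) hq).2 ha), ?_⟩
    have := h ∅ (Finset.empty_subset _) p (List.mem_cons_self)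
      ((afterAll_head p l ∅).2 rfl)
    simpa using this
  · rintro ⟨h1, h2⟩ R hR q hq ha
    rcases List.mem_cons.1 hq with rfl | hq'
    · have : R = ∅ := (afterAll_head q l R).1 ha
      subst this; simpa using h2
    · exact h1 R hR q hq' ((afterAll_cons_tail hp (hR.trans hM) hq').1 ha)

lemma charPred_cons_mem {p : L} {l : List L} {M : Finset L} {x : L}
    (hp : p ∉ l) (hM : M ⊆ l.toFinset) :
    CharPred (p :: l) x (insert p M) ↔
      (CharPred l x M ∧ ¬ p ≤ x ∧ CharPred l (x ⊔ p) M) := by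
  have hpM : p ∉ M := fun h => hp (by simpa using hM h)
  constructor
  · intro h
    refine ⟨fun R hR q hq ha => h R (hR.trans (Finset.subset_insert _ _)) q
      (List.mem_cons_of_mem _ hq) ((afterAll_cons_tail hp (hR.trans hM) hq).2 ha),
      ?_, ?_⟩
    · have := h ∅ (Finset.empty_subset _) p (List.mem_cons_self)
        ((afterAll_head p l ∅).2 rfl)
      simpa using this
    · intro R hR q hq ha
      have hpR : p ∉ R := fun hc => hpM (hR hc)
      have key := h (insert p R) (Finset.insert_subset_insert _ hR) q
        (List.mem_cons_of_mem _ hq) ?_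
      · intro hle
        apply key
        rw [Finset.sup_insert]
        calc q ≤ x ⊔ p ⊔ R.sup id := hle
        _ = x ⊔ (p ⊔ R.sup id) := by rw [sup_assoc]
        _ ≤ x ⊔ (id p ⊔ R.sup id) := le_rfl
      · intro r hr
        rcases Finset.mem_insert.1 hr with rfl | hr'
        · have hqp : q ≠ r := fun h => hp (h ▸ hq)
          rw [List.idxOf_cons_self, List.idxOf_cons_ne _ hqp.symm]
          exact Nat.succ_pos _
        · have hrl : r ∈ l := by simpa using (hR.trans hM) hr'
          have hrp : r ≠ p := fun h => hp (h ▸ hrl)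
          have hqp : q ≠ p := fun h => hp (h ▸ hq)
          rw [List.idxOf_cons_ne _ hrp.symm, List.idxOf_cons_ne _ hqp.symm,
            Nat.succ_lt_succ_iff]
          exact ha r hr'
  · rintro ⟨h1, h2, h3⟩ R hR q hq ha
    rcases List.mem_cons.1 hq with rfl | hq'
    · have : R = ∅ := (afterAll_head q l R).1 ha
      subst this; simpa using h2
    · by_cases hpR : p ∈ R
      · have hR' : R.erase p ⊆ M := fun r hr =>
          (Finset.mem_insert.1 (hR (Finset.mem_of_mem_erase hr))).resolve_left
            (Finset.ne_of_mem_erase hr)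
        have ha' : afterAll l (R.erase p) q := by
          rw [← afterAll_cons_tail hp (hR'.trans hM) hq']
          exact fun r hr => ha r (Finset.mem_of_mem_erase hr)
        have key := h3 (R.erase p) hR' q hq' ha'
        intro hle
        apply key
        have : R.sup id = p ⊔ (R.erase p).sup id := by
          conv_lhs => rw [← Finset.insert_erase hpR]
          rw [Finset.sup_insert]; rfl
        calc q ≤ x ⊔ R.sup id := hle
        _ = x ⊔ p ⊔ (R.erase p).sup id := by rw [this, sup_assoc]
      · have hRM : R ⊆ M := fun r hr =>
          (Finset.mem_insert.1 (hR hr)).resolve_left (fun h => hpR (h ▸ hr))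
        exact h1 R hRM q hq' ((afterAll_cons_tail hp (hRM.trans hM) hq').1 ha)

lemma pairwise_nodup {l : List L} (h : l.Pairwise (fun a b => ¬ b ≤ a)) : l.Nodup :=
  h.imp (fun hab => by rintro rfl; exact hab le_rfl)

theorem memP_iff : ∀ (l : List L), l.Pairwise (fun a b => ¬ b ≤ a) → ∀ z,
    (iterBl L l).1.mem z ↔ CharPred l (baseF l z) (marksF l z)
  | [], _, z => by
      constructor
      · intro _ R hR q hq; simp at hq
      · intro _; trivial
  | p :: l, hpw, z => by
      have hpw' := (List.pairwise_cons.1 hpw).2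
      have hnd' := pairwise_nodup hpw'
      have hp : p ∉ l := fun hc => by
        have := (List.pairwise_cons.1 hpw).1 p hc
        exact this le_rfl
      have hMs : ∀ y : (iterBl L l).1.α, marksF l y ⊆ l.toFinset := fun y => marksF_subset l y
      have hemb_le : ∀ y : (iterBl L l).1.α,
          (iterBl L l).1.le ((iterBl L l).2 p) y ↔ p ≤ baseF l y := by
        intro y
        rw [leF_iff l hnd', baseF_emb, marksF_emb]
        simp
      match z with
      | Sum.inl y =>
          show ((iterBl L l).1.mem y ∧ ¬ (iterBl L l).1.le ((iterBl L l).2 p) y) ↔ _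
          rw [show baseF (p::l) (Sum.inl y) = baseF l y from rfl,
            show marksF (p::l) (Sum.inl y) = marksF l y from rfl,
            charPred_cons_notmem hp (hMs y), memP_iff l hpw' y, hemb_le]
      | Sum.inr y =>
          show ((iterBl L l).1.mem y ∧ ¬ (iterBl L l).1.le ((iterBl L l).2 p) y ∧ _) ↔ _
          rw [show baseF (p::l) (Sum.inr y) = baseF l y from rfl,
            show marksF (p::l) (Sum.inr y) = insert p (marksF l y) from rfl,
            charPred_cons_mem hp (hMs y), memP_iff l hpw' y, hemb_le]
          constructor
          · rintro ⟨h1, h2, j, hjmem, hyj, hpj, hmin⟩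
            refine ⟨h1, h2, ?_⟩
            have hj := (memP_iff l hpw' j).1 hjmem
            obtain ⟨hby, hmy⟩ := (leF_iff l hnd' y j).1 hyj
            have hpb : p ≤ baseF l j := (hemb_le j).1 hpj
            intro R hR q hq ha hle
            exact hj R (hR.trans hmy) q hq ha
              (hle.trans (sup_le_sup (sup_le hby hpb) le_rfl))
          · rintro ⟨h1, h2, h3⟩
            refine ⟨h1, h2, rebF l y (baseF l y ⊔ p), ?_, ?_, ?_, ?_⟩
            · rw [memP_iff l hpw', baseF_reb, marksF_reb]
              exact h3
            · rw [leF_iff l hnd', baseF_reb, marksF_reb]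
              exact ⟨le_sup_left, Finset.Subset.refl _⟩
            · rw [hemb_le, baseF_reb]
              exact le_sup_right
            · intro u hu hyu hpu
              rw [leF_iff l hnd', baseF_reb, marksF_reb]
              obtain ⟨hbu, hmu⟩ := (leF_iff l hnd' y u).1 hyu
              exact ⟨sup_le hbu ((hemb_le u).1 hpu), hmu⟩

lemma not_le_of_idx_lt {l : List L} (hpw : l.Pairwise (fun a b => ¬ b ≤ a))
    {p q : L} (hp : p ∈ l) (hq : q ∈ l) (h : l.idxOf p < l.idxOf q) : ¬ q ≤ p := by
  rw [List.pairwise_iff_get] at hpw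
  have := hpw ⟨l.idxOf p, List.idxOf_lt_length_iff.2 hp⟩
    ⟨l.idxOf q, List.idxOf_lt_length_iff.2 hq⟩ h
  rwa [List.idxOf_get, List.idxOf_get] at this

section BotAtoms
variable {l : List L} (hb : ∀ q ∈ l, ⊥ < q) (hna : ∀ q ∈ l, ¬ IsAtom q)
  (hpw : l.Pairwise (fun a b => ¬ b ≤ a))

include hb hpw in
lemma mem_emb_bot : (iterBl L l).1.mem ((iterBl L l).2 ⊥) := by
  rw [memP_iff l hpw, baseF_emb, marksF_emb]
  intro R hR q hq ha hle
  have : R = ∅ := Finset.subset_empty.1 hR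
  subst this
  simp only [Finset.sup_empty, sup_bot_eq] at hle
  exact absurd (le_bot_iff.1 hle) (hb q hq).ne'

include hb hpw in
lemma isBotP_emb_bot : IsBotP (iterBl L l).1 ((iterBl L l).2 ⊥) := by
  refine ⟨mem_emb_bot hb hpw, fun u _ => ?_⟩
  rw [leF_iff l (pairwise_nodup hpw), baseF_emb, marksF_emb]
  exact ⟨bot_le, Finset.empty_subset _⟩

include hb hna hpw in
lemma mem_emb_atom {b : L} (hatom : IsAtom b) :
    (iterBl L l).1.mem ((iterBl L l).2 b) := by
  rw [memP_iff l hpw, baseF_emb, marksF_emb]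
  intro R hR q hq ha hle
  have : R = ∅ := Finset.subset_empty.1 hR
  subst this
  simp only [Finset.sup_empty, sup_bot_eq] at hle
  rcases (hatom.le_iff.1 hle) with h | h
  · exact absurd h (hb q hq).ne'
  · exact hna q hq (h ▸ hatom)

include hb hna hpw in
lemma isAtomP_emb_atom {b : L} (hatom : IsAtom b) :
    IsAtomP (iterBl L l).1 ((iterBl L l).2 b) := by
  have hnd := pairwise_nodup hpw
  refine ⟨mem_emb_atom hb hna hpw hatom, ?_, ?_⟩
  · rintro ⟨_, hall⟩
    have := hall _ (mem_emb_bot hb hpw)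
    rw [leF_iff l hnd, baseF_emb, baseF_emb] at this
    exact hatom.1 (le_bot_iff.1 this.1)
  · intro w hw hle
    rw [leF_iff l hnd, baseF_emb, marksF_emb] at hle
    obtain ⟨h1, h2⟩ := hle
    have hm : marksF l w = ∅ := Finset.subset_empty.1 h2
    rcases hatom.le_iff.1 h1 with h | h
    · right
      have : w = (iterBl L l).2 ⊥ := extF l hnd _ _ (by rw [h, baseF_emb]) (by rw [hm, marksF_emb])
      rw [this]
      exact isBotP_emb_bot hb hpw
    · left
      exact extF l hnd _ _ (by rw [h, baseF_emb]) (by rw [hm, marksF_emb])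

lemma marksF_single {p : L} (hnd : l.Nodup) (hp : p ∈ l) :
    marksF l (mkEl ⊥ {p} l) = {p} := by
  rw [marksF_mkEl l hnd]
  ext r
  simp only [Finset.mem_filter, List.mem_toFinset, Finset.mem_singleton]
  exact ⟨fun h => h.2, fun h => ⟨h ▸ hp, h⟩⟩

include hb hpw in
lemma mem_markEl {p : L} (hp : p ∈ l) :
    (iterBl L l).1.mem (mkEl ⊥ {p} l) := by
  have hnd := pairwise_nodup hpw
  rw [memP_iff l hpw, baseF_mkEl, marksF_single hnd hp]
  intro R hR q hq ha hle
  rcases Finset.subset_singleton_iff.1 hR with rfl | rfl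
  · simp only [Finset.sup_empty, sup_bot_eq] at hle
    exact absurd (le_bot_iff.1 hle) (hb q hq).ne'
  · simp only [Finset.sup_singleton, id, bot_sup_eq] at hle
    exact not_le_of_idx_lt hpw hp hq (ha p (Finset.mem_singleton_self p)) hle

include hb hpw in
lemma isAtomP_markEl {p : L} (hp : p ∈ l) :
    IsAtomP (iterBl L l).1 (mkEl ⊥ {p} l) := by
  have hnd := pairwise_nodup hpw
  refine ⟨mem_markEl hb hpw hp, ?_, ?_⟩
  · rintro ⟨_, hall⟩
    have := hall _ (mem_emb_bot hb hpw)
    rw [leF_iff l hnd, marksF_single hnd hp, marksF_emb] at this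
    simpa using this.2 (Finset.mem_singleton_self p)
  · intro w hw hle
    rw [leF_iff l hnd, baseF_mkEl, marksF_single hnd hp] at hle
    obtain ⟨h1, h2⟩ := hle
    have hwb : baseF l w = ⊥ := le_bot_iff.1 h1
    rcases Finset.subset_singleton_iff.1 h2 with h | h
    · right
      have : w = (iterBl L l).2 ⊥ := extF l hnd _ _ (by rw [hwb, baseF_emb]) (by rw [h, marksF_emb])
      rw [this]
      exact isBotP_emb_bot hb hpw
    · left
      exact extF l hnd _ _ (by rw [hwb, baseF_mkEl]) (by rw [h, marksF_single hnd hp])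

include hb hna hpw in
lemma atom_classify (hat : ∀ x : L, IsLUB {a : L | IsAtom a ∧ a ≤ x} x)
    {z : (iterBl L l).1.α} (hz : (iterBl L l).1.mem z) (hza : IsAtomP (iterBl L l).1 z) :
    (∃ b, IsAtom b ∧ z = (iterBl L l).2 b) ∨ (∃ p ∈ l, z = mkEl ⊥ {p} l) := by
  have hnd := pairwise_nodup hpw
  by_cases hbase : baseF l z = ⊥
  · by_cases hmk : marksF l z = ∅
    · exfalso
      apply hza.2.1
      have : z = (iterBl L l).2 ⊥ := extF l hnd _ _ (by rw [hbase, baseF_emb]) (by rw [hmk, marksF_emb])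
      rw [this]
      exact isBotP_emb_bot hb hpw
    · right
      obtain ⟨p, hpm⟩ := Finset.nonempty_iff_ne_empty.2 hmk
      have hpl : p ∈ l := by simpa using marksF_subset l z hpm
      refine ⟨p, hpl, ?_⟩
      have hle : (iterBl L l).1.le (mkEl ⊥ {p} l) z := by
        rw [leF_iff l hnd, baseF_mkEl, marksF_single hnd hpl]
        exact ⟨hbase ▸ le_rfl, Finset.singleton_subset_iff.2 hpm⟩
      rcases hza.2.2 _ (mem_markEl hb hpw hpl) hle with h | h
      · exact h.symm
      · exfalso
        have := h.2 _ (mem_emb_bot hb hpw)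
        rw [leF_iff l hnd, marksF_single hnd hpl, marksF_emb] at this
        simpa using this.2 (Finset.mem_singleton_self p)
  · -- base nonzero: get an atom below it
    have hex : ∃ b, IsAtom b ∧ b ≤ baseF l z := by
      by_contra hno
      push_neg at hno
      have : {a : L | IsAtom a ∧ a ≤ baseF l z} = ∅ := by
        ext a; simp only [Set.mem_setOf_eq, Set.mem_empty_iff_false, iff_false, not_and]
        exact fun ha hle => absurd hle (hno a ha)
      have hlub := hat (baseF l z)
      rw [this] at hlub
      exact hbase (le_bot_iff.1 (hlub.2 (by intro a ha; simp at ha)))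
    obtain ⟨b, hba, hble⟩ := hex
    left
    refine ⟨b, hba, ?_⟩
    have hle : (iterBl L l).1.le ((iterBl L l).2 b) z := by
      rw [leF_iff l hnd, baseF_emb, marksF_emb]
      exact ⟨hble, Finset.empty_subset _⟩
    rcases hza.2.2 _ (mem_emb_atom hb hna hpw hba) hle with h | h
    · exact h.symm
    · exfalso
      obtain ⟨_, hall⟩ := h
      have := hall _ (mem_emb_bot hb hpw)
      rw [leF_iff l hnd, baseF_emb, baseF_emb] at this
      exact hba.1 (le_bot_iff.1 this.1)

end BotAtoms

lemma coe_finset_sup_Iic {s : L} (B : Finset L) (v : L → Set.Iic s) :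
    ((B.sup v : Set.Iic s) : L) = B.sup (fun b => (v b : L)) := by
  induction B using Finset.cons_induction with
  | empty => simp [Set.Iic.coe_bot]
  | cons a B ha ih => rw [Finset.sup_cons, Finset.sup_cons, Set.Iic.coe_sup, ih]

lemma core_forward {G H : Set L} (hG : IsBuildingSet L G) (hH : IsPartialBuilding L G H)
    {N : Set L} (hN : N ⊆ H) (hnest : IsNestedIn L H N)
    (A₀ : Finset L) (hA₀ : ∀ a ∈ A₀, a ∈ N ∧ IsAtom a)
    (R : Finset L) (hRN : ∀ r ∈ R, r ∈ N)
    {q : L} (hqH : q ∈ H) (hqna : ¬ IsAtom q) (hqR : ∀ r ∈ R, ¬ q ≤ r) :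
    ¬ q ≤ A₀.sup id ⊔ R.sup id := by
  intro hle
  classical
  set B : Finset L := A₀ ∪ R with hB
  have hBN : ∀ b ∈ B, b ∈ N := by
    intro b hb
    rcases Finset.mem_union.1 hb with h | h
    · exact (hA₀ b h).1
    · exact hRN b h
  have hBG : ∀ b ∈ B, b ∈ G := fun b hb => hH.1 (hN (hBN b hb))
  set s : L := B.sup id with hs_def
  have hsupB : s = A₀.sup id ⊔ R.sup id := Finset.sup_union
  have hles : q ≤ s := by rw [hsupB]; exact hle
  have hqG : q ∈ G := hH.1 hqH
  have hqbot : ⊥ < q := hG.1 q hqG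
  have hs : ⊥ < s := lt_of_lt_of_le hqbot hles
  -- maximal elements of B
  set B' : Finset L := B.filter (fun b => ∀ c ∈ B, b ≤ c → b = c) with hB'
  have hB'B : B' ⊆ B := Finset.filter_subset _ _
  have hmax : ∀ b ∈ B, ∃ b' ∈ B', b ≤ b' := by
    intro b hb
    obtain ⟨m, hm, hmmax⟩ : ∃ m ∈ B.filter (fun c => b ≤ c), ∀ x ∈ B.filter (fun c => b ≤ c), ¬ m < x := by
      obtain ⟨m, hm⟩ := Finset.exists_maximal
        (⟨b, Finset.mem_filter.2 ⟨hb, le_rfl⟩⟩ : (B.filter (fun c => b ≤ c)).Nonempty)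
      exact ⟨m, hm.1, fun x hx hlt => hlt.not_ge (hm.2 hx hlt.le)⟩
    obtain ⟨hmB, hbm⟩ := Finset.mem_filter.1 hm
    refine ⟨m, Finset.mem_filter.2 ⟨hmB, fun c hc hmc => ?_⟩, hbm⟩
    by_contra hne
    exact hmmax c (Finset.mem_filter.2 ⟨hc, hbm.trans hmc⟩) (lt_of_le_of_ne hmc hne)
  have hsupB' : B'.sup id = s := by
    refine le_antisymm (Finset.sup_mono hB'B) (Finset.sup_le fun b hb => ?_)
    obtain ⟨b', hb', hle'⟩ := hmax b hb
    exact le_trans hle' (Finset.le_sup (f := id) hb')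
  have hB's : ∀ b ∈ B', b ≤ s := fun b hb => Finset.le_sup (f := id) (hB'B hb)
  have hanti : IsAntichain (· ≤ ·) (B' : Set L) := by
    intro a ha b hb hne hab
    obtain ⟨haB, hamax⟩ := Finset.mem_filter.1 ha
    exact hne (hamax b (hB'B hb) hab)
  -- factors
  have hfactor : ∀ e ∈ G, e ≤ s → ∃ g, g ∈ factorsOf G s ∧ e ≤ g := by
    intro e heG hes
    obtain ⟨m, hm, hmmax⟩ : ∃ m ∈ Finset.univ.filter (fun c => c ∈ G ∧ e ≤ c ∧ c ≤ s),
        ∀ x ∈ Finset.univ.filter (fun c => c ∈ G ∧ e ≤ c ∧ c ≤ s), ¬ m < x := by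
      obtain ⟨m, hm⟩ := Finset.exists_maximal
        (⟨e, by simp [heG, hes]⟩ : (Finset.univ.filter (fun c => c ∈ G ∧ e ≤ c ∧ c ≤ s)).Nonempty)
      exact ⟨m, hm.1, fun x hx hlt => hlt.not_ge (hm.2 hx hlt.le)⟩
    simp only [Finset.mem_filter, Finset.mem_univ, true_and] at hm
    obtain ⟨hmG, hem, hms⟩ := hm
    refine ⟨m, ⟨hmG, hms, fun h hhG hhs hmh => ?_⟩, hem⟩
    by_contra hne
    exact hmmax h (by simp [hhG, hem.trans hmh, hhs]) (lt_of_le_of_ne hmh hne)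
  obtain ⟨g, hgF, hqg⟩ := hfactor q hqG hles
  have hgH : g ∈ H := hH.2.2 q hqH hqna g hgF.1 hqg
  have hgbot : ⊥ < g := hG.1 g hgF.1
  have hgna : ¬ IsAtom g := by
    intro hg
    rcases hg.le_iff.1 hqg with h | h
    · exact hqbot.ne' h
    · exact hqna (h ▸ hg)
  -- choose factors for elements of B'
  have hchoice : ∀ b ∈ B', ∃ g', g' ∈ factorsOf G s ∧ b ≤ g' :=
    fun b hb => hfactor b (hBG b (hB'B hb)) (hB's b hb)
  choose! f hf1 hf2 using hchoice
  set B'' : Finset L := B'.filter (fun b => f b = g) with hB''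
  -- the building set isomorphism
  obtain ⟨φ, hφ⟩ := hG.2 s hs
  set ψ := φ.symm with hψ
  set gg : factorsOf G s := ⟨g, hgF⟩ with hgg
  set δ : factorsOf G s → ((g' : factorsOf G s) → ↥(Set.Iic (g' : L))) :=
    fun g' => fun h => if hh : h = g' then ⟨(g' : L), by simp [hh]⟩ else ⟨⊥, bot_le⟩ with hδ
  set v : L → Set.Iic s := fun b => ⟨b ⊓ s, inf_le_right⟩ with hv
  have hvcoe : ∀ b, b ≤ s → ((v b : L) = b) := fun b hb => inf_eq_left.2 hb
  -- u b ≤ δ (f b) for b ∈ B'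
  have hub : ∀ b, ∀ hb : b ∈ B', ψ (v b) ≤ δ ⟨f b, hf1 b hb⟩ := by
    intro b hb
    have h1 : v b ≤ ⟨f b, (hf1 b hb).2.1⟩ := by
      simp only [hv, Subtype.mk_le_mk]
      exact inf_le_of_left_le (hf2 b hb)
    have h3 : φ (δ ⟨f b, hf1 b hb⟩) = (⟨f b, (hf1 b hb).2.1⟩ : Set.Iic s) := by
      rw [hδ]; exact hφ _
    calc ψ (v b) ≤ ψ ⟨f b, (hf1 b hb).2.1⟩ := ψ.monotone h1
    _ = δ ⟨f b, hf1 b hb⟩ := by rw [← h3, hψ, φ.symm_apply_apply]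
  have hub_comp : ∀ b, ∀ hb : b ∈ B', f b ≠ g → ψ (v b) gg = ⊥ := by
    intro b hb hne
    have h4 := hub b hb gg
    have hne' : gg ≠ ⟨f b, hf1 b hb⟩ := by
      simp only [hgg, ne_eq, Subtype.mk.injEq]
      exact fun h => hne h.symm
    rw [hδ] at h4
    simp only at h4
    rw [dif_neg hne'] at h4
    exact le_bot_iff.1 h4
  -- B' is nonempty
  have hB'ne : B'.Nonempty := by
    by_contra h
    rw [Finset.not_nonempty_iff_eq_empty] at h
    rw [h] at hsupB'
    simp only [Finset.sup_empty] at hsupB'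
    exact hs.ne' hsupB'.symm
  -- step 1: the sup of B' in Iic s is the top
  have hstep1 : B'.sup v = (⊤ : Set.Iic s) := by
    apply Subtype.ext
    rw [coe_finset_sup_Iic, Set.Iic.coe_top]
    rw [Finset.sup_congr rfl (fun b hb => hvcoe b (hB's b hb))]
    exact hsupB'
  have hstep2 : B'.sup (fun b => ψ (v b)) = ⊤ := by
    have h6 := map_finset_sup ψ B' v
    rw [hstep1, map_top] at h6
    exact h6.symm
  have hstep3 : B'.sup (fun b => ψ (v b) gg) = (⊤ : Set.Iic (gg : L)) := by
    have h5 := congr_fun hstep2 gg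
    rw [Finset.sup_apply] at h5
    exact h5
  -- split the sup over B'' and its complement
  have hsplit : B''.sup (fun b => ψ (v b) gg) = (⊤ : Set.Iic (gg : L)) := by
    have hpart := Finset.filter_union_filter_not_eq (fun b => f b = g) B'
    have hrest : (B'.filter (fun b => ¬ f b = g)).sup (fun b => ψ (v b) gg) = ⊥ := by
      refine le_bot_iff.1 (Finset.sup_le fun b hb => ?_)
      obtain ⟨hb', hfb⟩ := Finset.mem_filter.1 hb
      rw [hub_comp b hb' hfb]
    calc B''.sup (fun b => ψ (v b) gg)
        = B''.sup (fun b => ψ (v b) gg) ⊔ (B'.filter (fun b => ¬ f b = g)).sup (fun b => ψ (v b) gg) := by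
          rw [hrest, sup_bot_eq]
    _ = B'.sup (fun b => ψ (v b) gg) := by rw [← Finset.sup_union, hB''] at *; rw [hpart]
    _ = ⊤ := hstep3
  have hB''ne : B''.Nonempty := by
    by_contra h
    rw [Finset.not_nonempty_iff_eq_empty] at h
    rw [h] at hsplit
    simp only [Finset.sup_empty] at hsplit
    have : (⊥ : L) = g := by
      have := congrArg (Subtype.val) hsplit
      rwa [Set.Iic.coe_bot, Set.Iic.coe_top] at this
    exact hgbot.ne this
  -- the sup of B'' in D is δ gg
  have hstep4 : B''.sup (fun b => ψ (v b)) = δ gg := by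
    refine le_antisymm (Finset.sup_le fun b hb => ?_) ?_
    · obtain ⟨hb', hfb⟩ := Finset.mem_filter.1 hb
      have h7 := hub b hb'
      have heq : (⟨f b, hf1 b hb'⟩ : factorsOf G s) = gg := Subtype.ext hfb
      rwa [heq] at h7
    · intro h
      by_cases hh : h = gg
      · subst hh
        rw [Finset.sup_apply]
        have hδgg : δ gg gg = (⊤ : Set.Iic (gg : L)) := by
          apply Subtype.ext
          rw [hδ]
          simp [Set.Iic.coe_top]
        rw [hδgg, ← hsplit]
      · have : δ gg h = ⊥ := by rw [hδ]; simp only [dif_neg hh]; rfl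
        rw [this]
        exact bot_le
  -- map back: the sup of B'' in L is g
  have hkey : B''.sup id = g := by
    have h8 := map_finset_sup φ B'' (fun b => ψ (v b))
    rw [hstep4] at h8
    have h9 : φ (δ gg) = (⟨g, hgF.2.1⟩ : Set.Iic s) := by rw [hδ]; exact hφ gg
    rw [h9] at h8
    have h10 : B''.sup (fun b => (φ ∘ fun b => ψ (v b)) b) = B''.sup v := by
      refine Finset.sup_congr rfl fun b _ => ?_
      simp only [Function.comp, hψ, φ.apply_symm_apply]
    rw [h10] at h8
    have h11 := congrArg Subtype.val h8
    rw [coe_finset_sup_Iic] at h11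
    simp only at h11
    rw [Finset.sup_congr rfl (fun b hb => hvcoe b (hB's b (Finset.mem_filter.1 hb).1))] at h11
    exact h11.symm
  -- final contradiction
  have hB''N : ↑B'' ⊆ N := by
    intro b hb
    have hb' : b ∈ B'' := hb
    exact hBN b (hB'B (Finset.mem_filter.1 hb').1)
  have hanti'' : IsAntichain (· ≤ ·) (B'' : Set L) := by
    refine hanti.subset ?_
    intro b hb
    have hb' : b ∈ B'' := hb
    exact Finset.mem_coe.2 (Finset.mem_filter.1 hb').1
  by_cases hcard : 2 ≤ B''.card
  · exact hnest B'' hB''N hcard hanti'' (hkey ▸ hgH)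
  · have : B''.card = 1 := le_antisymm (by omega) hB''ne.card_pos
    obtain ⟨b, hbeq⟩ := Finset.card_eq_one.1 this
    have hbB'' : b ∈ B'' := hbeq ▸ Finset.mem_singleton_self b
    have hbg : b = g := by
      rw [hbeq] at hkey
      simpa using hkey
    have hbB : b ∈ B := hB'B (Finset.mem_filter.1 hbB'').1
    rcases Finset.mem_union.1 hbB with h | h
    · exact hgna (hbg ▸ (hA₀ b h).2)
    · exact hqR b h (hbg ▸ hqg)

theorem nested_iff_bounded_in_blowup' {L : Type} [Lattice L] [BoundedOrder L]
    [Fintype L] [DecidableEq L]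
    (hgeo : IsGeomLat L) (G : Set L) (hG : IsBuildingSet L G) (htop : ⊤ ∈ G)
    (H : Set L) (hH : IsPartialBuilding L G H)
    (l : List L) (hl1 : ∀ q, q ∈ l ↔ q ∈ H ∧ ¬ IsAtom q) (hl2 : l.Nodup)
    (hl3 : ∀ i j : Fin l.length, l.get i < l.get j → i < j)
    (N : Set L) (hN : N ⊆ H) :
    IsNestedIn L H N ↔
      ∃ z : (iterBl L l).1.α, (iterBl L l).1.mem z ∧
        ∀ a : (iterBl L l).1.α, (iterBl L l).1.mem a → IsAtomP (iterBl L l).1 a →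
          blowDown L l a ∈ N → (iterBl L l).1.le a z := by
  classical
  have hb : ∀ q ∈ l, ⊥ < q := fun q hq => hG.1 q (hH.1 ((hl1 q).1 hq).1)
  have hna : ∀ q ∈ l, ¬ IsAtom q := fun q hq => ((hl1 q).1 hq).2
  have hpw : l.Pairwise (fun a b => ¬ b ≤ a) := by
    rw [List.pairwise_iff_get]
    intro i j hij hle
    rcases lt_or_eq_of_le hle with hlt | heq
    · exact lt_asymm hij (hl3 j i hlt)
    · exact hij.ne' ((List.Nodup.get_inj_iff hl2).1 heq)
  have hnd := pairwise_nodup hpw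
  have hidx : ∀ r q', r ∈ l → q' ∈ l → r < q' → l.idxOf r < l.idxOf q' := by
    intro r q' hr hq' hlt
    have h1 : l.get ⟨l.idxOf r, List.idxOf_lt_length_iff.2 hr⟩ = r := List.idxOf_get _
    have h2 : l.get ⟨l.idxOf q', List.idxOf_lt_length_iff.2 hq'⟩ = q' := List.idxOf_get _
    exact hl3 ⟨l.idxOf r, _⟩ ⟨l.idxOf q', _⟩ (by rw [h1, h2]; exact hlt)
  constructor
  · intro hnest
    set A₀ : Finset L := Finset.univ.filter (fun a => a ∈ N ∧ IsAtom a) with hA₀def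
    set x : L := A₀.sup id with hxdef
    set M : Finset L := l.toFinset.filter (· ∈ N) with hMdef
    refine ⟨mkEl x M l, ?_, ?_⟩
    · rw [memP_iff l hpw, baseF_mkEl, marksF_mkEl l hnd]
      intro R hR q hq ha hle2
      have hRN : ∀ r ∈ R, r ∈ N := by
        intro r hr
        have h3 := hR hr
        rw [Finset.mem_filter, hMdef, Finset.mem_filter] at h3
        exact h3.2.2
      have hRl : ∀ r ∈ R, r ∈ l := by
        intro r hr
        have h3 := hR hr
        rw [Finset.mem_filter, List.mem_toFinset] at h3
        exact h3.1
      have hqR : ∀ r ∈ R, ¬ q ≤ r := fun r hr =>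
        not_le_of_idx_lt hpw (hRl r hr) hq (ha r hr)
      have hqHna := (hl1 q).1 hq
      exact core_forward hG hH hN hnest A₀
        (fun a hA => by rw [hA₀def, Finset.mem_filter] at hA; exact hA.2)
        R hRN hqHna.1 hqHna.2 hqR hle2
    · intro a hamem haatom hbd
      rcases atom_classify hb hna hpw hgeo.1 hamem haatom with ⟨b, hba, rfl⟩ | ⟨p, hpl, rfl⟩
      · rw [blowDown_eq, baseF_emb, marksF_emb] at hbd
        simp only [Finset.sup_empty, sup_bot_eq] at hbd
        rw [leF_iff l hnd, baseF_emb, marksF_emb, baseF_mkEl]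
        refine ⟨?_, Finset.empty_subset _⟩
        exact Finset.le_sup (f := id) (by rw [hA₀def, Finset.mem_filter]; exact ⟨Finset.mem_univ b, hbd, hba⟩)
      · rw [blowDown_eq, baseF_mkEl, marksF_single hnd hpl] at hbd
        simp only [Finset.sup_singleton, id, bot_sup_eq] at hbd
        rw [leF_iff l hnd, baseF_mkEl, baseF_mkEl, marksF_single hnd hpl, marksF_mkEl l hnd]
        refine ⟨bot_le, Finset.singleton_subset_iff.2 ?_⟩
        rw [Finset.mem_filter, List.mem_toFinset, hMdef, Finset.mem_filter, List.mem_toFinset]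
        exact ⟨hpl, hpl, hbd⟩
  · rintro ⟨z, hzmem, hzb⟩
    intro S hSN hScard hSanti hSH
    have hSbot : ∀ b ∈ S, ⊥ < b := fun b hbS => hG.1 b (hH.1 (hN (hSN hbS)))
    have hlt : ∀ b ∈ S, b < S.sup id := by
      intro b hbS
      refine lt_of_le_of_ne (Finset.le_sup (f := id) hbS) fun heq => ?_
      obtain ⟨c, hcS, hcb⟩ := Finset.exists_mem_ne (lt_of_lt_of_le one_lt_two hScard) b
      exact hSanti hcS hbS hcb (heq ▸ Finset.le_sup (f := id) hcS)
    have hhna : ¬ IsAtom (S.sup id) := by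
      intro hat
      obtain ⟨b, hbS⟩ := Finset.card_pos.1 (lt_of_lt_of_le two_pos hScard)
      exact (hSbot b hbS).ne' (hat.lt_iff.1 (hlt b hbS))
    have hhl : S.sup id ∈ l := (hl1 _).2 ⟨hSH, hhna⟩
    have hzchar := (memP_iff l hpw z).1 hzmem
    set R := S.filter (fun b => ¬ IsAtom b) with hRdef
    have hRmarks : R ⊆ marksF l z := by
      intro r hr
      obtain ⟨hrS, hrna⟩ := Finset.mem_filter.1 hr
      have hrl : r ∈ l := (hl1 r).2 ⟨hN (hSN hrS), hrna⟩
      have hle := hzb (mkEl ⊥ {r} l) (mem_markEl hb hpw hrl) (isAtomP_markEl hb hpw hrl)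
        (by rw [blowDown_eq, baseF_mkEl, marksF_single hnd hrl]
            simpa using hSN hrS)
      rw [leF_iff l hnd, baseF_mkEl, marksF_single hnd hrl] at hle
      exact Finset.singleton_subset_iff.1 hle.2
    have hatomle : ∀ b ∈ S, IsAtom b → b ≤ baseF l z := by
      intro b hbS hba
      have hle := hzb ((iterBl L l).2 b) (mem_emb_atom hb hna hpw hba)
        (isAtomP_emb_atom hb hna hpw hba)
        (by rw [blowDown_eq, baseF_emb, marksF_emb]
            simpa using hSN hbS)
      rw [leF_iff l hnd, baseF_emb] at hle
      exact hle.1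
    have hafter : afterAll l R (S.sup id) := fun r hr =>
      hidx r (S.sup id) ((hl1 r).2 ⟨hN (hSN (Finset.mem_filter.1 hr).1), (Finset.mem_filter.1 hr).2⟩)
        hhl (hlt r (Finset.mem_filter.1 hr).1)
    refine hzchar R hRmarks (S.sup id) hhl hafter (Finset.sup_le fun b hbS => ?_)
    by_cases hba : IsAtom b
    · exact le_sup_of_le_left (hatomle b hbS hba)
    · exact le_sup_of_le_right (Finset.le_sup (f := id) (Finset.mem_filter.2 ⟨hbS, hba⟩))

/-- a subset `N ⊆ H` of a partial building set is `H`-nested if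
and only if, viewing `H` as the atom set of the iterated blowup `L(L,H)`
(atoms correspond to `H` via the blow-down map), `N` has an upper bound in
`L(L,H)`, i.e. `N` is a simplex of the atomic complex `K(L(L,H))`.  The list
`l` enumerates the non-atomic elements `H°` of `H` compatibly with the blowup
order (larger elements blown up first, i.e. later in the list). -/
theorem nested_iff_bounded_in_blowup {L : Type} [Lattice L] [BoundedOrder L]
    [Fintype L] [DecidableEq L]
    (hgeo : IsGeomLat L) (G : Set L) (hG : IsBuildingSet L G) (htop : ⊤ ∈ G)
    (H : Set L) (hH : IsPartialBuilding L G H)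
    (l : List L) (hl1 : ∀ q, q ∈ l ↔ q ∈ H ∧ ¬ IsAtom q) (hl2 : l.Nodup)
    (hl3 : ∀ i j : Fin l.length, l.get i < l.get j → i < j)
    (N : Set L) (hN : N ⊆ H) :
    IsNestedIn L H N ↔
      ∃ z : (iterBl L l).1.α, (iterBl L l).1.mem z ∧
        ∀ a : (iterBl L l).1.α, (iterBl L l).1.mem a → IsAtomP (iterBl L l).1 a →
          blowDown L l a ∈ N → (iterBl L l).1.le a z := by
  exact nested_iff_bounded_in_blowup' hgeo G hG htop H hH l hl1 hl2 hl3 N hN
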